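/- If m is a supermodular game, then for every vector v in the core C(m), the class of tightness sets S^m_v = { S ⊆ N : Σ_{i∈S} v_i = m(S) } is closed under intersection and union. -/

import Mathlib

open Finset

/-- A game is supermodular if `m A + m B ≤ m (A ∪ B) + m (A ∩ B)` for all `A, B`. -/
def Supermod {N : Type*} [DecidableEq N] (m : Finset N → ℝ) : Prop :=
  ∀ A B : Finset N, m A + m B ≤ m (A ∪ B) + m (A ∩ B)

/-- The core of a game. -/
def core {N : Type*} [Fintype N] [DecidableEq N] (m : Finset N → ℝ) : Set (N → ℝ) :=
  {v | ∑ i, v i = m Finset.univ ∧ ∀ S : Finset N, m S ≤ ∑ i ∈ S, v i}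

/-- For a supermodular game, the class of tightness sets of any core element is closed
under intersection and union. -/
theorem stmt8 {N : Type*} [Fintype N] [DecidableEq N]
    (m : Finset N → ℝ) (hm : m ∅ = 0) (hsup : Supermod m)
    (v : N → ℝ) (hv : v ∈ core m)
    (S T : Finset N) (hS : ∑ i ∈ S, v i = m S) (hT : ∑ i ∈ T, v i = m T) :
    (∑ i ∈ S ∪ T, v i = m (S ∪ T)) ∧ (∑ i ∈ S ∩ T, v i = m (S ∩ T)) := by
  obtain ⟨-, hcore⟩ := hv
  have hkey : ∑ i ∈ S ∪ T, v i + ∑ i ∈ S ∩ T, v i = ∑ i ∈ S, v i + ∑ i ∈ T, v i :=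
    Finset.sum_union_inter
  have h1 := hsup S T
  have h2 := hcore (S ∪ T)
  have h3 := hcore (S ∩ T)
  constructor <;> linarith
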